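/- Let M be a topological space and E : ℝ → 𝒯(M) a strongly regular spectral family. Then the induced function f_E : 𝒟(E) → ℝ, f_E(x) := inf { λ | x ∈ E_λ }, is continuous on the admissible domain 𝒟(E) = M \ ⋂_λ E_λ. -/

import Mathlib

/-- The function induced by a strongly regular spectral family `E` in
`𝒯(M)` is continuous on the admissible domain `𝒟(E) = M \ ⋂_λ E_λ`. -/
theorem induced_function_continuousOn_admissible_domain
    {M : Type*} [TopologicalSpace M] (E : ℝ → Set M)
    (hopen : ∀ l : ℝ, IsOpen (E l))
    (hmono : Monotone E)
    (hright : ∀ l : ℝ, E l = interior (⋂ μ ∈ Set.Ioi l, E μ))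
    (hbot : interior (⋂ l : ℝ, E l) = ∅)
    (htop : (⋃ l : ℝ, E l) = Set.univ)
    (hreg : ∀ l μ : ℝ, l < μ → closure (E l) ⊆ E μ) :
    ContinuousOn (fun x => sInf {l : ℝ | x ∈ E l}) ((⋂ l : ℝ, E l)ᶜ) := by
  intro x hx
  set f : M → ℝ := fun x => sInf {l : ℝ | x ∈ E l} with hf
  have hne : ∀ y : M, {l : ℝ | y ∈ E l}.Nonempty := by
    intro y
    have : y ∈ ⋃ l, E l := htop ▸ Set.mem_univ y
    simpa [Set.Nonempty] using this
  obtain ⟨l0, hl0⟩ : ∃ l, x ∉ E l := by simpa using hx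
  have hbdd : BddBelow {l : ℝ | x ∈ E l} := by
    refine ⟨l0, fun l hl => ?_⟩
    by_contra h
    push_neg at h
    exact hl0 (hmono h.le hl)
  have hnotmem : ∀ μ, μ < f x → x ∉ E μ := fun μ hμ hmem =>
    absurd (csInf_le hbdd hmem) (not_le.2 hμ)
  have hmem : ∀ μ, f x < μ → x ∈ E μ := by
    intro μ hμ
    obtain ⟨l, hl, hlμ⟩ := exists_lt_of_csInf_lt (hne x) hμ
    exact hmono hlμ.le hl
  refine Metric.tendsto_nhds.2 fun ε hε => ?_
  set ε' := ε / 2 with hε'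
  have hε'pos : 0 < ε' := by positivity
  have hU : IsOpen (E (f x + ε') \ closure (E (f x - ε'))) :=
    (hopen _).sdiff isClosed_closure
  have hxU : x ∈ E (f x + ε') \ closure (E (f x - ε')) := by
    refine ⟨hmem _ (by linarith), fun hc => ?_⟩
    exact hnotmem (f x - ε' / 2) (by linarith) (hreg _ _ (by linarith) hc)
  filter_upwards [mem_nhdsWithin_of_mem_nhds (hU.mem_nhds hxU)] with y hy
  obtain ⟨hy1, hy2⟩ := hy
  have hy2' : y ∉ E (f x - ε') := fun h => hy2 (subset_closure h)
  have hlb : ∀ l ∈ {l : ℝ | y ∈ E l}, f x - ε' ≤ l := by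
    intro l hl
    by_contra h
    push_neg at h
    exact hy2' (hmono h.le hl)
  have hb : BddBelow {l : ℝ | y ∈ E l} := ⟨f x - ε', hlb⟩
  have h1 : f y ≤ f x + ε' := csInf_le hb hy1
  have h2 : f x - ε' ≤ f y := le_csInf (hne y) hlb
  rw [Real.dist_eq, abs_sub_lt_iff]
  constructor <;> linarith
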